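/- There exists a constant C > 0, depending only on α and T, such that for all t sufficiently near T (with max(0, T − 1/e) < t < T) one has ψ₂(t) := (2/b_t²)·√( 2‖f_t ⊗₁ g_t‖ + ⟨f_t, g_t⟩² ) ≤ C/√|log(T−t)|. -/

import Mathlib

open MeasureTheory Real Filter Topology

/-- `λ_t := |log(T−t)|/(2α−1)`. -/
noncomputable def lam (T α t : ℝ) : ℝ := |Real.log (T - t)| / (2 * α - 1)

/-- The kernel `f_t`. -/
noncomputable def fker (T α t : ℝ) (u v : ℝ) : ℝ :=
  if u ∈ Set.Icc (0:ℝ) t ∧ v ∈ Set.Icc (0:ℝ) t then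
    (1 / (2 * Real.sqrt (lam T α t))) * (T - max u v) ^ (α - 1) * (T - min u v) ^ (-α)
  else 0

/-- The kernel `g_t`. -/
noncomputable def gker (T α t : ℝ) (u v : ℝ) : ℝ :=
  if u ∈ Set.Icc (0:ℝ) t ∧ v ∈ Set.Icc (0:ℝ) t then
    (T - u) ^ (-α) * (T - v) ^ (-α) *
      ((T - max u v) ^ (2 * α - 1) - (T - t) ^ (2 * α - 1)) / |Real.log (T - t)|
  else 0

/-- `⟨p,q⟩ := ∫_{[0,T]²} p(u,v) q(u,v) du dv`. -/
noncomputable def ip (T : ℝ) (p q : ℝ → ℝ → ℝ) : ℝ :=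
  ∫ u in Set.Icc (0:ℝ) T, ∫ v in Set.Icc (0:ℝ) T, p u v * q u v

/-- `‖p‖² := ⟨p,p⟩`. -/
noncomputable def normSq (T : ℝ) (p : ℝ → ℝ → ℝ) : ℝ := ip T p p

/-- The contraction `(p ⊗₁ q)(x,y) := ∫₀^T p(x,u) q(y,u) du`. -/
noncomputable def contr (T : ℝ) (p q : ℝ → ℝ → ℝ) : ℝ → ℝ → ℝ :=
  fun x y => ∫ u in Set.Icc (0:ℝ) T, p x u * q y u

/-- `b_t := (1/λ_t)·∫₀ᵗ ∫₀ˢ (T−s)^{2α−2}(T−u)^{−2α} du ds`. -/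
noncomputable def bfun (T α t : ℝ) : ℝ :=
  (1 / lam T α t) *
    ∫ s in (0:ℝ)..t, ∫ u in (0:ℝ)..s, (T - s) ^ (2 * α - 2) * (T - u) ^ (-(2 * α))

/-- `A_{t,1}`. -/
noncomputable def A1 (T α t : ℝ) : ℝ :=
  (1 / (lam T α t) ^ 2) *
    ∫ x4 in (0:ℝ)..t, ∫ x3 in (0:ℝ)..x4, ∫ x2 in (0:ℝ)..x3, ∫ x1 in (0:ℝ)..x2,
      (T - x4) ^ (2 * α - 2) * (T - x3) ^ (-1 : ℝ) * (T - x2) ^ (-1 : ℝ) *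
        (T - x1) ^ (-(2 * α))

/-- `A_{t,2}`. -/
noncomputable def A2 (T α t : ℝ) : ℝ :=
  (1 / (2 * (lam T α t) ^ 2)) *
    ∫ x4 in (0:ℝ)..t, ∫ x2 in (0:ℝ)..x4, ∫ x3 in (0:ℝ)..x2, ∫ x1 in (0:ℝ)..x3,
      (T - x4) ^ (2 * α - 2) * (T - x2) ^ (2 * α - 2) * (T - x3) ^ (-(2 * α)) *
        (T - x1) ^ (-(2 * α))
open MeasureTheory Real Set

lemma ikey {T : ℝ} (p : ℝ) (hp : p ≠ -1) {x₁ x₂ : ℝ} (h₁ : x₁ ≤ x₂) (h₂ : x₂ < T) :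
    ∫ u in x₁..x₂, (T - u) ^ p = ((T - x₁) ^ (p+1) - (T - x₂) ^ (p+1)) / (p+1) := by
  rw [show (fun u => (T - u) ^ p) = (fun s : ℝ => s ^ p) ∘ (fun u => T - u) from rfl]
  rw [show (∫ u in x₁..x₂, ((fun s : ℝ => s ^ p) ∘ (fun u => T - u)) u) =
      ∫ u in x₁..x₂, (fun s : ℝ => s ^ p) (T - u) from rfl]
  rw [intervalIntegral.integral_comp_sub_left (fun s : ℝ => s ^ p) T]
  rw [integral_rpow (Or.inr ⟨hp, Set.notMem_uIcc_of_lt (by linarith) (by linarith)⟩)]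

lemma ilog {T : ℝ} {x₁ x₂ : ℝ} (h₁ : x₁ ≤ x₂) (h₂ : x₂ < T) :
    ∫ u in x₁..x₂, (T - u) ^ (-1 : ℝ) = Real.log (T - x₁) - Real.log (T - x₂) := by
  have : ∀ u : ℝ, (T - u) ^ (-1 : ℝ) = (fun s : ℝ => s⁻¹) (T - u) := by
    intro u; simp [Real.rpow_neg_one]
  simp_rw [this]
  rw [intervalIntegral.integral_comp_sub_left (fun s : ℝ => s⁻¹) T]
  rw [integral_inv (Set.notMem_uIcc_of_lt (by linarith) (by linarith))]
  rw [Real.log_div (by linarith) (by linarith)]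

lemma iint {T : ℝ} (p : ℝ) {a b : ℝ} (ha : a < T) (hb : b < T) :
    IntervalIntegrable (fun u => (T - u) ^ p) volume a b := by
  apply ContinuousOn.intervalIntegrable
  apply ContinuousOn.rpow_const (by fun_prop)
  intro u hu
  have : u ≤ max a b := hu.2
  left
  have : 0 < T - u := by rcases max_cases a b with ⟨h,_⟩|⟨h,_⟩ <;> rw [h] at this <;> linarith
  linarith

lemma ile1 {T : ℝ} {p : ℝ} (hp : -1 < p) {x₁ x₂ : ℝ} (h₁ : x₁ ≤ x₂) (h₂ : x₂ < T) :
    ∫ u in x₁..x₂, (T - u) ^ p ≤ (T - x₁) ^ (p+1) / (p+1) := by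
  rw [ikey p (by linarith) h₁ h₂]
  have h3 : (0:ℝ) ≤ (T - x₂) ^ (p+1) := Real.rpow_nonneg (by linarith) _
  have hp1 : (0:ℝ) < p + 1 := by linarith
  exact (div_le_div_iff_of_pos_right hp1).mpr (by linarith)

lemma ile2 {T : ℝ} {p : ℝ} (hp : p < -1) {x₁ x₂ : ℝ} (h₁ : x₁ ≤ x₂) (h₂ : x₂ < T) :
    ∫ u in x₁..x₂, (T - u) ^ p ≤ (T - x₂) ^ (p+1) / (-(p+1)) := by
  rw [ikey p (by linarith) h₁ h₂]
  have h3 : (0:ℝ) ≤ (T - x₁) ^ (p+1) := Real.rpow_nonneg (by linarith) _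
  have hp1 : (0:ℝ) < -(p + 1) := by linarith
  have heq : ((T - x₁) ^ (p+1) - (T - x₂) ^ (p+1)) / (p+1)
      = ((T - x₂) ^ (p+1) - (T - x₁) ^ (p+1)) / (-(p+1)) := by
    rw [div_neg, ← neg_div, neg_sub]
  rw [heq]
  exact (div_le_div_iff_of_pos_right hp1).mpr (by linarith)

lemma icc_eq {a b : ℝ} (h : a ≤ b) (F : ℝ → ℝ) :
    ∫ u in Set.Icc a b, F u = ∫ u in a..b, F u := by
  rw [intervalIntegral.integral_of_le h, integral_Icc_eq_integral_Ioc]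

lemma icc_indicator {t T : ℝ} (h : t ≤ T) (F : ℝ → ℝ) :
    ∫ u in Set.Icc (0:ℝ) T, Set.indicator (Set.Icc (0:ℝ) t) F u = ∫ u in Set.Icc (0:ℝ) t, F u := by
  rw [setIntegral_indicator measurableSet_Icc, Set.inter_eq_right.mpr (Set.Icc_subset_Icc le_rfl h)]
noncomputable def mker (T t β x u : ℝ) : ℝ :=
  if x ∈ Set.Icc (0:ℝ) t ∧ u ∈ Set.Icc (0:ℝ) t then
    (T - max x u) ^ (β - 1) * (T - min x u) ^ (-β) else 0

lemma rpadd {b : ℝ} (hb : 0 < b) (p q r : ℝ) (h : p + q = r) : b ^ p * b ^ q = b ^ r := by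
  rw [← Real.rpow_add hb, h]

lemma mker_nonneg {T t β x u : ℝ} (htT : t < T) : 0 ≤ mker T t β x u := by
  unfold mker
  split_ifs with h
  · have h1 : max x u ≤ t := max_le h.1.2 h.2.2
    have h2 : min x u ≤ t := le_trans (min_le_left _ _) h.1.2
    exact mul_nonneg (Real.rpow_nonneg (by linarith) _) (Real.rpow_nonneg (by linarith) _)
  · exact le_rfl

lemma mker_symm (T t β x u : ℝ) : mker T t β x u = mker T t β u x := by
  unfold mker
  rw [max_comm, min_comm]
  by_cases h : x ∈ Set.Icc (0:ℝ) t ∧ u ∈ Set.Icc (0:ℝ) t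
  · rw [if_pos h, if_pos ⟨h.2, h.1⟩]
  · rw [if_neg h, if_neg (fun h' => h ⟨h'.2, h'.1⟩)]

lemma mker_of_not_left {T t β x : ℝ} (hx : x ∉ Set.Icc (0:ℝ) t) (u : ℝ) : mker T t β x u = 0 := by
  unfold mker
  rw [if_neg (fun h => hx h.1)]

lemma fker_eq (T α t x u : ℝ) :
    fker T α t x u = (1 / (2 * Real.sqrt (lam T α t))) * mker T t α x u := by
  unfold fker mker
  split_ifs with h
  · ring
  · ring

lemma gker_nonneg {T α t : ℝ} (hα : 1/2 < α) (htT : t < T) (y u : ℝ) : 0 ≤ gker T α t y u := by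
  unfold gker
  split_ifs with h
  · have h1 : max y u ≤ t := max_le h.1.2 h.2.2
    have h2 : (T - t) ^ (2*α - 1) ≤ (T - max y u) ^ (2*α-1) :=
      Real.rpow_le_rpow (by linarith) (by linarith) (by linarith)
    apply div_nonneg _ (abs_nonneg _)
    apply mul_nonneg
    apply mul_nonneg (Real.rpow_nonneg (by linarith [h.1.2]) _)
      (Real.rpow_nonneg (by linarith [h.2.2]) _)
    linarith
  · exact le_rfl

lemma gker_le {T α t : ℝ} (hα : 1/2 < α) (htT : t < T)
    (hL : 0 < |Real.log (T - t)|) (y u : ℝ) :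
    gker T α t y u ≤ (1 / |Real.log (T - t)|) * mker T t α y u := by
  unfold gker mker
  split_ifs with h
  · obtain ⟨hy, hu⟩ := h
    have hyT : y < T := lt_of_le_of_lt hy.2 htT
    have huT : u < T := lt_of_le_of_lt hu.2 htT
    have hM : 0 < T - max y u := by rcases max_cases y u with ⟨e,_⟩|⟨e,_⟩ <;> rw [e] <;> linarith
    have hm : 0 < T - min y u := by rcases min_cases y u with ⟨e,_⟩|⟨e,_⟩ <;> rw [e] <;> linarith
    have e1 : (T - y) ^ (-α) * (T - u) ^ (-α) = (T - max y u) ^ (-α) * (T - min y u) ^ (-α) := by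
      rcases le_total y u with h'|h'
      · rw [max_eq_right h', min_eq_left h', mul_comm]
      · rw [max_eq_left h', min_eq_right h']
    have e2 : (T - max y u) ^ (-α) * (T - max y u) ^ (2*α-1) = (T - max y u) ^ (α - 1) :=
      rpadd hM _ _ _ (by ring)
    have hsub : (T - max y u) ^ (2*α-1) - (T - t) ^ (2*α-1) ≤ (T - max y u) ^ (2*α-1) := by
      have := Real.rpow_nonneg (le_of_lt (show (0:ℝ) < T - t by linarith)) (2*α-1)
      linarith
    have hprod : (T - y) ^ (-α) * (T - u) ^ (-α) * ((T - max y u) ^ (2*α-1) - (T - t) ^ (2*α-1))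
        ≤ (T - max y u) ^ (α - 1) * (T - min y u) ^ (-α) := by
      rw [e1]
      calc (T - max y u) ^ (-α) * (T - min y u) ^ (-α) *
            ((T - max y u) ^ (2*α-1) - (T - t) ^ (2*α-1))
          ≤ (T - max y u) ^ (-α) * (T - min y u) ^ (-α) * (T - max y u) ^ (2*α-1) := by
            apply mul_le_mul_of_nonneg_left hsub
            exact mul_nonneg (Real.rpow_nonneg hM.le _) (Real.rpow_nonneg hm.le _)
        _ = ((T - max y u) ^ (-α) * (T - max y u) ^ (2*α-1)) * (T - min y u) ^ (-α) := by ring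
        _ = (T - max y u) ^ (α - 1) * (T - min y u) ^ (-α) := by rw [e2]
    rw [one_div_mul_eq_div, div_le_div_iff_of_pos_right hL]
    exact hprod
  · simp
lemma kcont {T t : ℝ} (β x : ℝ) (hx : x < T) (ht : t < T) :
    ContinuousOn (fun u => (T - max x u) ^ (β - 1) * (T - min x u) ^ (-β)) (Set.Iic t) := by
  apply ContinuousOn.mul
  · apply ContinuousOn.rpow_const (by fun_prop)
    intro u hu
    have h1 : max x u < T := max_lt hx (lt_of_le_of_lt hu ht)
    left; intro h'; nlinarith [h']
  · apply ContinuousOn.rpow_const (by fun_prop)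
    intro u hu
    have h1 : min x u < T := lt_of_le_of_lt (min_le_left _ _) hx
    left; intro h'; nlinarith [h']

lemma uIcc_sub_Iic {a b t : ℝ} (ha : a ≤ t) (hb : b ≤ t) : Set.uIcc a b ⊆ Set.Iic t := by
  intro u hu
  have := hu.2
  exact le_trans this (max_le ha hb)

lemma pint {T t α : ℝ} {x y : ℝ} (hxT : x < T) (hyT : y < T) (htT : t < T)
    {a b : ℝ} (hat : a ≤ t) (hbt : b ≤ t) :
    IntervalIntegrable (fun u => ((T - max x u) ^ (α-1) * (T - min x u) ^ (-α)) *
      ((T - max y u) ^ (α-1) * (T - min y u) ^ (-α))) volume a b :=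
  (((kcont (α) x hxT htT).mono (uIcc_sub_Iic hat hbt)).mul
    ((kcont (α) y hyT htT).mono (uIcc_sub_Iic hat hbt))).intervalIntegrable

lemma alg_main {T x y α δ : ℝ} (hδ : 0 < δ) (h0x : 0 < T - x) (hxy : T - x ≤ T - y) :
    (T-x) ^ (α-1) * (T-y) ^ (-α) ≤ (T-x) ^ (α-δ-1) * (T-y) ^ (-(α-δ)) := by
  have h0y : 0 < T - y := lt_of_lt_of_le h0x hxy
  have e1 : (T-x) ^ (α-1) = (T-x) ^ (α-δ-1) * (T-x) ^ δ := (rpadd h0x _ _ _ (by ring)).symm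
  have e2 : (T-y) ^ (-(α-δ)) = (T-y) ^ δ * (T-y) ^ (-α) := (rpadd h0y _ _ _ (by ring)).symm
  rw [e1, e2]
  have hle : (T-x) ^ δ ≤ (T-y) ^ δ := Real.rpow_le_rpow h0x.le hxy hδ.le
  have hA : (0:ℝ) ≤ (T-x) ^ (α-δ-1) := Real.rpow_nonneg h0x.le _
  have hC : (0:ℝ) ≤ (T-y) ^ (-α) := Real.rpow_nonneg h0y.le _
  calc (T-x) ^ (α-δ-1) * (T-x) ^ δ * (T-y) ^ (-α)
      = ((T-x) ^ (α-δ-1) * (T-y) ^ (-α)) * (T-x) ^ δ := by ring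
    _ ≤ ((T-x) ^ (α-δ-1) * (T-y) ^ (-α)) * (T-y) ^ δ :=
        mul_le_mul_of_nonneg_left hle (mul_nonneg hA hC)
    _ = (T-x) ^ (α-δ-1) * ((T-y) ^ δ * (T-y) ^ (-α)) := by ring
lemma mker_of_not_right {T t β y : ℝ} (hy : y ∉ Set.Icc (0:ℝ) t) (x : ℝ) : mker T t β x y = 0 := by
  unfold mker
  rw [if_neg (fun h => hy h.2)]

lemma contr_core_aux {T α t δ : ℝ} (hα : 1/2 < α) (hδ : 0 < δ) (hδα : δ < α - 1/2)
    (ht0 : 0 ≤ t) (htT : t < T) {x y : ℝ}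
    (hx : x ∈ Set.Icc (0:ℝ) t) (hy : y ∈ Set.Icc (0:ℝ) t) (hyx : y ≤ x) :
    ∫ u in Set.Icc (0:ℝ) T, mker T t α x u * mker T t α y u
      ≤ (2/(2*α-1) + 1/δ) * ((T - x) ^ (α-δ-1) * (T - y) ^ (-(α-δ))) := by
  obtain ⟨hx0, hxt⟩ := hx
  obtain ⟨hy0, hyt⟩ := hy
  have hxT : x < T := lt_of_le_of_lt hxt htT
  have hyT : y < T := lt_of_le_of_lt hyt htT
  have h0Tx : 0 < T - x := by linarith
  have h0Ty : 0 < T - y := by linarith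
  have hTxy : T - x ≤ T - y := by linarith
  have h2a : (0:ℝ) < 2*α - 1 := by linarith
  set P : ℝ → ℝ := fun u => ((T - max x u) ^ (α-1) * (T - min x u) ^ (-α)) *
      ((T - max y u) ^ (α-1) * (T - min y u) ^ (-α)) with hP
  set R : ℝ := (T - x) ^ (α-δ-1) * (T - y) ^ (-(α-δ)) with hR
  have hRn : 0 ≤ R := mul_nonneg (Real.rpow_nonneg h0Tx.le _) (Real.rpow_nonneg h0Ty.le _)
  have e0 : (fun u => mker T t α x u * mker T t α y u) = Set.indicator (Set.Icc (0:ℝ) t) P := by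
    funext u
    by_cases hu : u ∈ Set.Icc (0:ℝ) t
    · rw [Set.indicator_of_mem hu]
      unfold mker
      rw [if_pos ⟨⟨hx0, hxt⟩, hu⟩, if_pos ⟨⟨hy0, hyt⟩, hu⟩]
    · rw [Set.indicator_of_notMem hu]
      unfold mker
      rw [if_neg (fun h => hu h.2), zero_mul]
  have e1 : ∫ u in Set.Icc (0:ℝ) T, mker T t α x u * mker T t α y u = ∫ u in (0:ℝ)..t, P u := by
    rw [e0, icc_indicator htT.le, icc_eq ht0]
  have i1 : IntervalIntegrable P volume 0 y := pint hxT hyT htT ht0 hyt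
  have i2 : IntervalIntegrable P volume y x := pint hxT hyT htT hyt hxt
  have i3 : IntervalIntegrable P volume x t := pint hxT hyT htT hxt le_rfl
  have esplit : ((∫ u in (0:ℝ)..y, P u) + ∫ u in y..x, P u) + ∫ u in x..t, P u
      = ∫ u in (0:ℝ)..t, P u := by
    rw [intervalIntegral.integral_add_adjacent_intervals i1 i2,
      intervalIntegral.integral_add_adjacent_intervals (i1.trans i2) i3]
  -- piece 1
  have hp1 : ∫ u in (0:ℝ)..y, P u ≤ (1/(2*α-1)) * R := by
    have ecg : Set.EqOn P (fun u => ((T-x) ^ (α-1) * (T-y) ^ (α-1)) * (T-u) ^ (-(2*α)))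
        (Set.uIcc (0:ℝ) y) := by
      intro u hu
      rw [Set.uIcc_of_le hy0] at hu
      have hTu : 0 < T - u := by linarith [hu.2]
      simp only [hP]
      rw [max_eq_left (le_trans hu.2 hyx), min_eq_right (le_trans hu.2 hyx),
        max_eq_left hu.2, min_eq_right hu.2, ← rpadd hTu (-α) (-α) (-(2*α)) (by ring)]
      ring
    rw [intervalIntegral.integral_congr ecg, intervalIntegral.integral_const_mul]
    have hb := ile2 (T := T) (p := -(2*α)) (by linarith) hy0 hyT
    have hcn : (0:ℝ) ≤ (T-x) ^ (α-1) * (T-y) ^ (α-1) :=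
      mul_nonneg (Real.rpow_nonneg h0Tx.le _) (Real.rpow_nonneg h0Ty.le _)
    calc ((T-x) ^ (α-1) * (T-y) ^ (α-1)) * ∫ u in (0:ℝ)..y, (T-u) ^ (-(2*α))
        ≤ ((T-x) ^ (α-1) * (T-y) ^ (α-1)) * ((T-y) ^ (-(2*α)+1) / (-(-(2*α)+1))) :=
          mul_le_mul_of_nonneg_left hb hcn
      _ = (1/(2*α-1)) * ((T-x) ^ (α-1) * ((T-y) ^ (α-1) * (T-y) ^ (-(2*α)+1))) := by
          rw [div_eq_mul_inv]; ring_nf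
      _ = (1/(2*α-1)) * ((T-x) ^ (α-1) * (T-y) ^ (-α)) := by
          rw [rpadd h0Ty (α-1) (-(2*α)+1) (-α) (by ring)]
      _ ≤ (1/(2*α-1)) * R := by
          rw [hR]
          exact mul_le_mul_of_nonneg_left (alg_main hδ h0Tx hTxy) (by positivity)
  -- piece 2
  have hp2 : ∫ u in y..x, P u ≤ (1/δ) * R := by
    have ecg : Set.EqOn P (fun u => ((T-x) ^ (α-1) * (T-y) ^ (-α)) * (T-u) ^ (-1:ℝ))
        (Set.uIcc y x) := by
      intro u hu
      rw [Set.uIcc_of_le hyx] at hu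
      have hTu : 0 < T - u := by linarith [hu.2]
      simp only [hP]
      rw [max_eq_left hu.2, min_eq_right hu.2, max_eq_right hu.1, min_eq_left hu.1,
        ← rpadd hTu (-α) (α-1) (-1) (by ring)]
      ring
    rw [intervalIntegral.integral_congr ecg]
    have hcn : (0:ℝ) ≤ (T-x) ^ (α-1) * (T-y) ^ (-α) :=
      mul_nonneg (Real.rpow_nonneg h0Tx.le _) (Real.rpow_nonneg h0Ty.le _)
    have hmono : ∫ u in y..x, ((T-x) ^ (α-1) * (T-y) ^ (-α)) * (T-u) ^ (-1:ℝ)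
        ≤ ∫ u in y..x, (((T-x) ^ (α-1) * (T-y) ^ (-α)) * (T-x) ^ (-δ)) * (T-u) ^ (δ-1) := by
      apply intervalIntegral.integral_mono_on hyx
        (((iint (-1:ℝ) hyT hxT)).const_mul _)
        (((iint (δ-1) hyT hxT)).const_mul _)
      intro u hu
      have hTu : 0 < T - u := by linarith [hu.2]
      have key : (T-u) ^ (-1:ℝ) ≤ (T-x) ^ (-δ) * (T-u) ^ (δ-1) := by
        rw [← rpadd hTu (-δ) (δ-1) (-1) (by ring)]
        exact mul_le_mul_of_nonneg_right
          (Real.rpow_le_rpow_of_nonpos h0Tx (by linarith [hu.2]) (by linarith))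
          (Real.rpow_nonneg hTu.le _)
      calc ((T-x) ^ (α-1) * (T-y) ^ (-α)) * (T-u) ^ (-1:ℝ)
          ≤ ((T-x) ^ (α-1) * (T-y) ^ (-α)) * ((T-x) ^ (-δ) * (T-u) ^ (δ-1)) :=
            mul_le_mul_of_nonneg_left key hcn
        _ = (((T-x) ^ (α-1) * (T-y) ^ (-α)) * (T-x) ^ (-δ)) * (T-u) ^ (δ-1) := by ring
    have hval : ∫ u in y..x, (((T-x) ^ (α-1) * (T-y) ^ (-α)) * (T-x) ^ (-δ)) * (T-u) ^ (δ-1)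
        ≤ (((T-x) ^ (α-1) * (T-y) ^ (-α)) * (T-x) ^ (-δ)) * ((T-y) ^ (δ-1+1) / (δ-1+1)) := by
      rw [intervalIntegral.integral_const_mul]
      exact mul_le_mul_of_nonneg_left (ile1 (by linarith) hyx hxT)
        (mul_nonneg hcn (Real.rpow_nonneg h0Tx.le _))
    have heq : (((T-x) ^ (α-1) * (T-y) ^ (-α)) * (T-x) ^ (-δ)) * ((T-y) ^ (δ-1+1) / (δ-1+1))
        = (1/δ) * R := by
      rw [hR]
      have ea : (T-x) ^ (α-1) * (T-x) ^ (-δ) = (T-x) ^ (α-δ-1) := rpadd h0Tx _ _ _ (by ring)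
      have eb : (T-y) ^ (-α) * (T-y) ^ (δ-1+1) = (T-y) ^ (-(α-δ)) := rpadd h0Ty _ _ _ (by ring)
      calc (((T-x) ^ (α-1) * (T-y) ^ (-α)) * (T-x) ^ (-δ)) * ((T-y) ^ (δ-1+1) / (δ-1+1))
          = ((T-x) ^ (α-1) * (T-x) ^ (-δ)) * ((T-y) ^ (-α) * (T-y) ^ (δ-1+1)) * (1/(δ-1+1)) := by
            ring
        _ = (T-x) ^ (α-δ-1) * (T-y) ^ (-(α-δ)) * (1/(δ-1+1)) := by rw [ea, eb]
        _ = 1/δ * ((T-x) ^ (α-δ-1) * (T-y) ^ (-(α-δ))) := by ring_nf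
    linarith [le_trans hmono hval]
  -- piece 3
  have hp3 : ∫ u in x..t, P u ≤ (1/(2*α-1)) * R := by
    have ecg : Set.EqOn P (fun u => ((T-x) ^ (-α) * (T-y) ^ (-α)) * (T-u) ^ (2*α-2))
        (Set.uIcc x t) := by
      intro u hu
      rw [Set.uIcc_of_le hxt] at hu
      have hTu : 0 < T - u := by linarith [hu.2]
      simp only [hP]
      rw [max_eq_right hu.1, min_eq_left hu.1, max_eq_right (le_trans hyx hu.1),
        min_eq_left (le_trans hyx hu.1), ← rpadd hTu (α-1) (α-1) (2*α-2) (by ring)]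
      ring
    rw [intervalIntegral.integral_congr ecg, intervalIntegral.integral_const_mul]
    have hb := ile1 (T := T) (p := 2*α-2) (by linarith) hxt htT
    have hcn : (0:ℝ) ≤ (T-x) ^ (-α) * (T-y) ^ (-α) :=
      mul_nonneg (Real.rpow_nonneg h0Tx.le _) (Real.rpow_nonneg h0Ty.le _)
    calc ((T-x) ^ (-α) * (T-y) ^ (-α)) * ∫ u in x..t, (T-u) ^ (2*α-2)
        ≤ ((T-x) ^ (-α) * (T-y) ^ (-α)) * ((T-x) ^ (2*α-2+1) / (2*α-2+1)) :=
          mul_le_mul_of_nonneg_left hb hcn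
      _ = (1/(2*α-1)) * (((T-x) ^ (-α) * (T-x) ^ (2*α-2+1)) * (T-y) ^ (-α)) := by
          rw [div_eq_mul_inv]; ring_nf
      _ = (1/(2*α-1)) * ((T-x) ^ (α-1) * (T-y) ^ (-α)) := by
          rw [rpadd h0Tx (-α) (2*α-2+1) (α-1) (by ring)]
      _ ≤ (1/(2*α-1)) * R := by
          rw [hR]
          exact mul_le_mul_of_nonneg_left (alg_main hδ h0Tx hTxy) (by positivity)
  rw [e1, ← esplit]
  calc ((∫ u in (0:ℝ)..y, P u) + ∫ u in y..x, P u) + ∫ u in x..t, P u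
      ≤ ((1/(2*α-1)) * R + (1/δ) * R) + (1/(2*α-1)) * R := add_le_add (add_le_add hp1 hp2) hp3
    _ = (2/(2*α-1) + 1/δ) * R := by ring
lemma mker_pos_val {T t β x y : ℝ} (hx : x ∈ Set.Icc (0:ℝ) t) (hy : y ∈ Set.Icc (0:ℝ) t) :
    mker T t β x y = (T - max x y) ^ (β - 1) * (T - min x y) ^ (-β) := by
  unfold mker
  rw [if_pos ⟨hx, hy⟩]

lemma contr_core {T α t δ : ℝ} (hα : 1/2 < α) (hδ : 0 < δ) (hδα : δ < α - 1/2)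
    (ht0 : 0 ≤ t) (htT : t < T) (x y : ℝ) :
    ∫ u in Set.Icc (0:ℝ) T, mker T t α x u * mker T t α y u
      ≤ (2/(2*α-1) + 1/δ) * mker T t (α-δ) x y := by
  have hK : (0:ℝ) ≤ 2/(2*α-1) + 1/δ := by
    have : (0:ℝ) < 2*α-1 := by linarith
    positivity
  by_cases hx : x ∈ Set.Icc (0:ℝ) t
  · by_cases hy : y ∈ Set.Icc (0:ℝ) t
    · rcases le_total y x with h | h
      · have := contr_core_aux hα hδ hδα ht0 htT hx hy h
        rw [mker_pos_val hx hy, max_eq_left h, min_eq_right h]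
        exact this
      · have haux := contr_core_aux hα hδ hδα ht0 htT hy hx h
        rw [mker_pos_val hx hy, max_eq_right h, min_eq_left h]
        rw [show (fun u => mker T t α x u * mker T t α y u)
            = (fun u => mker T t α y u * mker T t α x u) from funext (fun u => mul_comm _ _)]
        exact haux
    · have hz : ∀ u : ℝ, mker T t α x u * mker T t α y u = 0 := fun u => by
        rw [mker_of_not_left (β := α) (T := T) hy u, mul_zero]
      rw [show (fun u => mker T t α x u * mker T t α y u) = (fun _ => (0:ℝ)) from funext hz]
      rw [mker_of_not_right hy, mul_zero]
      simp
  · have hz : ∀ u : ℝ, mker T t α x u * mker T t α y u = 0 := fun u => by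
      rw [mker_of_not_left hx, zero_mul]
    rw [show (fun u => mker T t α x u * mker T t α y u) = (fun _ => (0:ℝ)) from funext hz]
    rw [mker_of_not_left hx, mul_zero]
    simp

-- integrability of products of mker over Icc 0 T, and of mker squares
lemma mker_prod_integrable {T t α β : ℝ} (htT : t < T) (ht0 : 0 ≤ t) (x y : ℝ) :
    IntegrableOn (fun u => mker T t α x u * mker T t β y u) (Set.Icc (0:ℝ) T) := by
  have e0 : (fun u => mker T t α x u * mker T t β y u) = Set.indicator (Set.Icc (0:ℝ) t)
      (fun u => (if x ∈ Set.Icc (0:ℝ) t then (T - max x u) ^ (α-1) * (T - min x u) ^ (-α) else 0) *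
        (if y ∈ Set.Icc (0:ℝ) t then (T - max y u) ^ (β-1) * (T - min y u) ^ (-β) else 0)) := by
    funext u
    unfold mker
    by_cases hu : u ∈ Set.Icc (0:ℝ) t <;> by_cases hx' : x ∈ Set.Icc (0:ℝ) t <;>
      by_cases hy' : y ∈ Set.Icc (0:ℝ) t <;> simp [Set.indicator, hu, hx', hy']
  rw [e0]
  apply Integrable.integrableOn
  rw [integrable_indicator_iff measurableSet_Icc]
  apply ContinuousOn.integrableOn_Icc
  apply ContinuousOn.mul
  · by_cases hx : x ∈ Set.Icc (0:ℝ) t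
    · simp only [if_pos hx]
      exact (kcont α x (lt_of_le_of_lt hx.2 htT) htT).mono (fun u hu => hu.2)
    · simp only [if_neg hx]
      exact continuousOn_const
  · by_cases hy : y ∈ Set.Icc (0:ℝ) t
    · simp only [if_pos hy]
      exact (kcont β y (lt_of_le_of_lt hy.2 htT) htT).mono (fun u hu => hu.2)
    · simp only [if_neg hy]
      exact continuousOn_const
lemma sqint_inner {T t β : ℝ} (hβ : 1/2 < β) (ht0 : 0 ≤ t) (htT : t < T) (x : ℝ) :
    ∫ y in Set.Icc (0:ℝ) T, (mker T t β x y)^2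
      ≤ Set.indicator (Set.Icc (0:ℝ) t) (fun x => 2/(2*β-1) * (T - x) ^ (-1:ℝ)) x := by
  by_cases hx : x ∈ Set.Icc (0:ℝ) t
  · obtain ⟨hx0, hxt⟩ := hx
    have hxT : x < T := lt_of_le_of_lt hxt htT
    have h0Tx : 0 < T - x := by linarith
    set G : ℝ → ℝ := fun y => (T - max x y) ^ (β-1) * (T - min x y) ^ (-β) with hG
    have e0 : (fun y => (mker T t β x y)^2) = Set.indicator (Set.Icc (0:ℝ) t)
        (fun y => (G y)^2) := by
      funext y
      unfold mker
      by_cases hy : y ∈ Set.Icc (0:ℝ) t <;>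
        simp [Set.indicator, hy, show x ∈ Set.Icc (0:ℝ) t from ⟨hx0, hxt⟩, hG]
    rw [e0, icc_indicator htT.le, icc_eq ht0,
      Set.indicator_of_mem (show x ∈ Set.Icc (0:ℝ) t from ⟨hx0, hxt⟩)]
    have icont := kcont β x hxT htT
    have i1 : IntervalIntegrable (fun y => (G y)^2) volume 0 x :=
      (((icont.mono (uIcc_sub_Iic ht0 hxt))).pow 2).intervalIntegrable
    have i2 : IntervalIntegrable (fun y => (G y)^2) volume x t :=
      (((icont.mono (uIcc_sub_Iic hxt le_rfl))).pow 2).intervalIntegrable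
    rw [← intervalIntegral.integral_add_adjacent_intervals i1 i2]
    have hp1 : ∫ y in (0:ℝ)..x, (G y)^2 ≤ 1/(2*β-1) * (T-x) ^ (-1:ℝ) := by
      have ecg : Set.EqOn (fun y => (G y)^2)
          (fun y => (T-x) ^ (2*β-2) * (T-y) ^ (-(2*β))) (Set.uIcc (0:ℝ) x) := by
        intro y hy
        rw [Set.uIcc_of_le hx0] at hy
        have hTy : 0 < T - y := by linarith [hy.2]
        simp only [hG]
        rw [max_eq_left hy.2, min_eq_right hy.2, mul_pow, sq, sq,
          rpadd h0Tx (β-1) (β-1) (2*β-2) (by ring), rpadd hTy (-β) (-β) (-(2*β)) (by ring)]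
      rw [intervalIntegral.integral_congr ecg, intervalIntegral.integral_const_mul]
      have hb := ile2 (T := T) (p := -(2*β)) (by linarith) hx0 hxT
      calc (T-x) ^ (2*β-2) * ∫ y in (0:ℝ)..x, (T-y) ^ (-(2*β))
          ≤ (T-x) ^ (2*β-2) * ((T-x) ^ (-(2*β)+1) / (-(-(2*β)+1))) :=
            mul_le_mul_of_nonneg_left hb (Real.rpow_nonneg h0Tx.le _)
        _ = 1/(2*β-1) * ((T-x) ^ (2*β-2) * (T-x) ^ (-(2*β)+1)) := by
            rw [div_eq_mul_inv]; ring_nf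
        _ = 1/(2*β-1) * (T-x) ^ (-1:ℝ) := by
            rw [rpadd h0Tx (2*β-2) (-(2*β)+1) (-1) (by ring)]
    have hp2 : ∫ y in x..t, (G y)^2 ≤ 1/(2*β-1) * (T-x) ^ (-1:ℝ) := by
      have ecg : Set.EqOn (fun y => (G y)^2)
          (fun y => (T-x) ^ (-(2*β)) * (T-y) ^ (2*β-2)) (Set.uIcc x t) := by
        intro y hy
        rw [Set.uIcc_of_le hxt] at hy
        have hTy : 0 < T - y := by linarith [hy.2]
        simp only [hG]
        rw [max_eq_right hy.1, min_eq_left hy.1, mul_pow, sq, sq,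
          rpadd hTy (β-1) (β-1) (2*β-2) (by ring), rpadd h0Tx (-β) (-β) (-(2*β)) (by ring)]
        ring
      rw [intervalIntegral.integral_congr ecg, intervalIntegral.integral_const_mul]
      have hb := ile1 (T := T) (p := 2*β-2) (by linarith) hxt htT
      calc (T-x) ^ (-(2*β)) * ∫ y in x..t, (T-y) ^ (2*β-2)
          ≤ (T-x) ^ (-(2*β)) * ((T-x) ^ (2*β-2+1) / (2*β-2+1)) :=
            mul_le_mul_of_nonneg_left hb (Real.rpow_nonneg h0Tx.le _)
        _ = 1/(2*β-1) * ((T-x) ^ (-(2*β)) * (T-x) ^ (2*β-2+1)) := by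
            rw [div_eq_mul_inv]; ring_nf
        _ = 1/(2*β-1) * (T-x) ^ (-1:ℝ) := by
            rw [rpadd h0Tx (-(2*β)) (2*β-2+1) (-1) (by ring)]
    calc (∫ y in (0:ℝ)..x, (G y)^2) + ∫ y in x..t, (G y)^2
        ≤ 1/(2*β-1) * (T-x) ^ (-1:ℝ) + 1/(2*β-1) * (T-x) ^ (-1:ℝ) := add_le_add hp1 hp2
      _ = 2/(2*β-1) * (T-x) ^ (-1:ℝ) := by ring
  · have hz : ∀ y : ℝ, (mker T t β x y)^2 = 0 := fun y => by
      rw [mker_of_not_left hx, sq, mul_zero]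
    rw [show (fun y => (mker T t β x y)^2) = (fun _ => (0:ℝ)) from funext hz,
      Set.indicator_of_notMem hx]
    simp

lemma ind_integrable {T t β : ℝ} (hβ : 1/2 < β) (ht0 : 0 ≤ t) (htT : t < T) (c : ℝ) :
    IntegrableOn (Set.indicator (Set.Icc (0:ℝ) t) (fun x => c * (T - x) ^ (-1:ℝ)))
      (Set.Icc (0:ℝ) T) := by
  apply Integrable.integrableOn
  rw [integrable_indicator_iff measurableSet_Icc]
  apply ContinuousOn.integrableOn_Icc
  apply ContinuousOn.mul continuousOn_const
  apply ContinuousOn.rpow_const (by fun_prop)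
  intro u hu
  left
  have : u < T := lt_of_le_of_lt hu.2 htT
  intro h'; nlinarith [h']

lemma ind_value {T t : ℝ} (ht0 : 0 ≤ t) (htT : t < T) (c : ℝ) :
    ∫ x in Set.Icc (0:ℝ) T, Set.indicator (Set.Icc (0:ℝ) t) (fun x => c * (T - x) ^ (-1:ℝ)) x
      = c * (Real.log T - Real.log (T - t)) := by
  rw [icc_indicator htT.le, icc_eq ht0, intervalIntegral.integral_const_mul,
    ilog ht0 htT, sub_zero]
section mainbounds

variable {T α t : ℝ} (hα : 1/2 < α) (ht0 : 0 ≤ t) (htT : t < T)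
  (hL : 0 < |Real.log (T - t)|)

include htT in
lemma fker_nonneg (x u : ℝ) : 0 ≤ fker T α t x u := by
  rw [fker_eq]
  exact mul_nonneg (by positivity) (mker_nonneg htT)

include hα htT hL in
lemma fg_pt (x y u : ℝ) : fker T α t x u * gker T α t y u
    ≤ ((1/(2*Real.sqrt (lam T α t))) * (1/|Real.log (T-t)|)) *
      (mker T t α x u * mker T t α y u) := by
  rw [fker_eq]
  calc (1/(2*Real.sqrt (lam T α t)) * mker T t α x u) * gker T α t y u
      ≤ (1/(2*Real.sqrt (lam T α t)) * mker T t α x u) *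
        ((1 / |Real.log (T - t)|) * mker T t α y u) :=
        mul_le_mul_of_nonneg_left (gker_le hα htT hL y u)
          (mul_nonneg (by positivity) (mker_nonneg htT))
    _ = ((1/(2*Real.sqrt (lam T α t))) * (1/|Real.log (T-t)|)) *
        (mker T t α x u * mker T t α y u) := by ring

include hα ht0 htT hL in
lemma contr_step1 (x y : ℝ) :
    ∫ u in Set.Icc (0:ℝ) T, fker T α t x u * gker T α t y u
      ≤ ((1/(2*Real.sqrt (lam T α t))) * (1/|Real.log (T-t)|)) *
        ∫ u in Set.Icc (0:ℝ) T, mker T t α x u * mker T t α y u := by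
  rw [← MeasureTheory.integral_const_mul]
  apply integral_mono_of_nonneg
  · exact Filter.Eventually.of_forall fun u =>
      mul_nonneg (fker_nonneg htT x u) (gker_nonneg hα htT y u)
  · exact ((mker_prod_integrable htT ht0 x y).const_mul _)
  · exact Filter.Eventually.of_forall fun u => fg_pt hα htT hL x y u

include hα ht0 htT hL in
lemma contr_le {δ : ℝ} (hδ : 0 < δ) (hδα : δ < α - 1/2) (x y : ℝ) :
    contr T (fker T α t) (gker T α t) x y
      ≤ (((1/(2*Real.sqrt (lam T α t))) * (1/|Real.log (T-t)|)) * (2/(2*α-1) + 1/δ)) *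
        mker T t (α-δ) x y := by
  unfold contr
  calc ∫ u in Set.Icc (0:ℝ) T, fker T α t x u * gker T α t y u
      ≤ ((1/(2*Real.sqrt (lam T α t))) * (1/|Real.log (T-t)|)) *
        ∫ u in Set.Icc (0:ℝ) T, mker T t α x u * mker T t α y u := contr_step1 hα ht0 htT hL x y
    _ ≤ ((1/(2*Real.sqrt (lam T α t))) * (1/|Real.log (T-t)|)) *
        ((2/(2*α-1) + 1/δ) * mker T t (α-δ) x y) :=
        mul_le_mul_of_nonneg_left (contr_core hα hδ hδα ht0 htT x y) (by positivity)
    _ = _ := by ring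

include hα htT in
lemma contr_nonneg (x y : ℝ) : 0 ≤ contr T (fker T α t) (gker T α t) x y :=
  setIntegral_nonneg measurableSet_Icc fun u _ =>
    mul_nonneg (fker_nonneg htT x u) (gker_nonneg hα htT y u)

include hα ht0 htT hL in
lemma ip_fg_le : ip T (fker T α t) (gker T α t)
    ≤ ((1/(2*Real.sqrt (lam T α t))) * (1/|Real.log (T-t)|)) * (2/(2*α-1)) *
      (Real.log T - Real.log (T - t)) := by
  unfold ip
  have inner_le : ∀ u, ∫ v in Set.Icc (0:ℝ) T, fker T α t u v * gker T α t u v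
      ≤ ((1/(2*Real.sqrt (lam T α t))) * (1/|Real.log (T-t)|)) *
        Set.indicator (Set.Icc (0:ℝ) t) (fun x => 2/(2*α-1) * (T - x) ^ (-1:ℝ)) u := by
    intro u
    calc ∫ v in Set.Icc (0:ℝ) T, fker T α t u v * gker T α t u v
        ≤ ((1/(2*Real.sqrt (lam T α t))) * (1/|Real.log (T-t)|)) *
          ∫ v in Set.Icc (0:ℝ) T, mker T t α u v * mker T t α u v :=
          contr_step1 hα ht0 htT hL u u
      _ = ((1/(2*Real.sqrt (lam T α t))) * (1/|Real.log (T-t)|)) *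
          ∫ v in Set.Icc (0:ℝ) T, (mker T t α u v)^2 := by
          rw [show (fun v => mker T t α u v * mker T t α u v)
            = (fun v => (mker T t α u v)^2) from funext fun v => by ring]
      _ ≤ _ := mul_le_mul_of_nonneg_left (sqint_inner hα ht0 htT u) (by positivity)
  calc ∫ u in Set.Icc (0:ℝ) T, ∫ v in Set.Icc (0:ℝ) T, fker T α t u v * gker T α t u v
      ≤ ∫ u in Set.Icc (0:ℝ) T, ((1/(2*Real.sqrt (lam T α t))) * (1/|Real.log (T-t)|)) *
          Set.indicator (Set.Icc (0:ℝ) t) (fun x => 2/(2*α-1) * (T - x) ^ (-1:ℝ)) u := by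
        apply integral_mono_of_nonneg
        · exact Filter.Eventually.of_forall fun u => setIntegral_nonneg measurableSet_Icc
            fun v _ => mul_nonneg (fker_nonneg htT u v) (gker_nonneg hα htT u v)
        · exact ((ind_integrable hα ht0 htT (2/(2*α-1))).const_mul _)
        · exact Filter.Eventually.of_forall inner_le
    _ = ((1/(2*Real.sqrt (lam T α t))) * (1/|Real.log (T-t)|)) *
        ((2/(2*α-1)) * (Real.log T - Real.log (T - t))) := by
        rw [MeasureTheory.integral_const_mul, ind_value ht0 htT]
    _ = ((1/(2*Real.sqrt (lam T α t))) * (1/|Real.log (T-t)|)) * (2/(2*α-1)) *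
        (Real.log T - Real.log (T - t)) := by ring

include hα htT in
lemma ip_fg_nonneg : 0 ≤ ip T (fker T α t) (gker T α t) := by
  unfold ip
  exact setIntegral_nonneg measurableSet_Icc fun u _ => setIntegral_nonneg measurableSet_Icc
    fun v _ => mul_nonneg (fker_nonneg htT u v) (gker_nonneg hα htT u v)

lemma normSq_nonneg' (p : ℝ → ℝ → ℝ) : 0 ≤ normSq T p := by
  unfold normSq ip
  exact setIntegral_nonneg measurableSet_Icc fun u _ => setIntegral_nonneg measurableSet_Icc
    fun v _ => mul_self_nonneg _

include hα ht0 htT hL in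
lemma normSq_le {δ : ℝ} (hδ : 0 < δ) (hδα : δ < α - 1/2) :
    normSq T (contr T (fker T α t) (gker T α t))
      ≤ ((((1/(2*Real.sqrt (lam T α t))) * (1/|Real.log (T-t)|)) * (2/(2*α-1) + 1/δ))^2) *
        ((2/(2*(α-δ)-1)) * (Real.log T - Real.log (T - t))) := by
  have hβ : 1/2 < α - δ := by linarith
  set Q : ℝ := ((1/(2*Real.sqrt (lam T α t))) * (1/|Real.log (T-t)|)) * (2/(2*α-1) + 1/δ)
    with hQ
  have hQ0 : 0 ≤ Q := by
    rw [hQ]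
    have h1 : (0:ℝ) < 2*α - 1 := by linarith
    positivity
  have hpt : ∀ u v, contr T (fker T α t) (gker T α t) u v * contr T (fker T α t) (gker T α t) u v
      ≤ Q^2 * (mker T t (α-δ) u v)^2 := by
    intro u v
    have h1 := contr_le hα ht0 htT hL hδ hδα u v
    have h2 := contr_nonneg hα htT u v
    have h3 : 0 ≤ Q * mker T t (α-δ) u v := mul_nonneg hQ0 (mker_nonneg htT)
    calc contr T (fker T α t) (gker T α t) u v * contr T (fker T α t) (gker T α t) u v
        ≤ (Q * mker T t (α-δ) u v) * (Q * mker T t (α-δ) u v) := mul_le_mul h1 h1 h2 h3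
      _ = Q^2 * (mker T t (α-δ) u v)^2 := by ring
  have inner_le : ∀ u, ∫ v in Set.Icc (0:ℝ) T,
      contr T (fker T α t) (gker T α t) u v * contr T (fker T α t) (gker T α t) u v
      ≤ Q^2 * Set.indicator (Set.Icc (0:ℝ) t) (fun x => 2/(2*(α-δ)-1) * (T - x) ^ (-1:ℝ)) u := by
    intro u
    calc ∫ v in Set.Icc (0:ℝ) T,
        contr T (fker T α t) (gker T α t) u v * contr T (fker T α t) (gker T α t) u v
        ≤ ∫ v in Set.Icc (0:ℝ) T, Q^2 * (mker T t (α-δ) u v)^2 := by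
          apply integral_mono_of_nonneg
          · exact Filter.Eventually.of_forall fun v => mul_nonneg
              (contr_nonneg hα htT u v) (contr_nonneg hα htT u v)
          · have := (mker_prod_integrable (α := α-δ) (β := α-δ) htT ht0 u u).const_mul (Q^2)
            rw [show (fun v => Q^2 * (mker T t (α-δ) u v * mker T t (α-δ) u v))
              = (fun v => Q^2 * (mker T t (α-δ) u v)^2) from funext fun v => by ring] at this
            exact this
          · exact Filter.Eventually.of_forall fun v => hpt u v
      _ = Q^2 * ∫ v in Set.Icc (0:ℝ) T, (mker T t (α-δ) u v)^2 :=
          MeasureTheory.integral_const_mul _ _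
      _ ≤ _ := mul_le_mul_of_nonneg_left (sqint_inner hβ ht0 htT u) (by positivity)
  unfold normSq ip
  calc ∫ u in Set.Icc (0:ℝ) T, ∫ v in Set.Icc (0:ℝ) T,
      contr T (fker T α t) (gker T α t) u v * contr T (fker T α t) (gker T α t) u v
      ≤ ∫ u in Set.Icc (0:ℝ) T, Q^2 *
          Set.indicator (Set.Icc (0:ℝ) t) (fun x => 2/(2*(α-δ)-1) * (T - x) ^ (-1:ℝ)) u := by
        apply integral_mono_of_nonneg
        · exact Filter.Eventually.of_forall fun u => setIntegral_nonneg measurableSet_Icc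
            fun v _ => mul_self_nonneg _
        · exact ((ind_integrable hβ ht0 htT (2/(2*(α-δ)-1))).const_mul _)
        · exact Filter.Eventually.of_forall inner_le
    _ = Q^2 * ((2/(2*(α-δ)-1)) * (Real.log T - Real.log (T - t))) := by
        rw [MeasureTheory.integral_const_mul, ind_value ht0 htT]

end mainbounds
lemma bfun_ge {T α t : ℝ} (hα : 1/2 < α) (hT : 0 < T) (ht0 : 0 ≤ t) (htT : t < T)
    (hlog : Real.log (T - t) < 0) :
    (|Real.log (T-t)| + Real.log T - 1/(2*α-1)) / |Real.log (T-t)| ≤ bfun T α t := by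
  have h2a : (0:ℝ) < 2*α-1 := by linarith
  have hTt : 0 < T - t := by linarith
  have hLpos : 0 < |Real.log (T-t)| := abs_pos.mpr (ne_of_lt hlog)
  have hLe : |Real.log (T-t)| = -Real.log (T-t) := abs_of_neg hlog
  have hne1 : (-(2*α)+1 : ℝ) ≠ 0 := by intro h; linarith
  have hne2 : (2*α-2+1 : ℝ) ≠ 0 := by intro h; linarith
  have hinner : Set.EqOn
      (fun s => ∫ u in (0:ℝ)..s, (T - s) ^ (2*α-2) * (T - u) ^ (-(2*α)))
      (fun s => ((T-s) ^ (-1:ℝ) - T ^ (-(2*α)+1) * (T-s) ^ (2*α-2)) / (2*α-1))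
      (Set.uIcc (0:ℝ) t) := by
    intro s hs
    rw [Set.uIcc_of_le ht0] at hs
    have hsT : s < T := lt_of_le_of_lt hs.2 htT
    have h0Ts : 0 < T - s := by linarith
    simp only
    rw [intervalIntegral.integral_const_mul,
      ikey (-(2*α)) (by intro h; apply hne1; linarith [h]) hs.1 hsT, sub_zero]
    have e1 : (T-s) ^ (2*α-2) * (T-s) ^ (-(2*α)+1) = (T-s) ^ (-1:ℝ) :=
      rpadd h0Ts _ _ _ (by ring)
    rw [← e1]
    field_simp
    ring
  have houter : ∫ s in (0:ℝ)..t,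
      ((T-s) ^ (-1:ℝ) - T ^ (-(2*α)+1) * (T-s) ^ (2*α-2)) / (2*α-1)
      = ((Real.log T - Real.log (T-t)) -
          T ^ (-(2*α)+1) * ((T ^ (2*α-2+1) - (T-t) ^ (2*α-2+1)) / (2*α-2+1))) / (2*α-1) := by
    rw [intervalIntegral.integral_div, intervalIntegral.integral_sub
      (iint (-1:ℝ) (by linarith) htT)
      ((iint (2*α-2) (by linarith) htT).const_mul _),
      ilog ht0 htT, sub_zero, intervalIntegral.integral_const_mul,
      ikey (2*α-2) (by intro h; apply hne2; linarith [h]) ht0 htT, sub_zero]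
  have hkey : T ^ (-(2*α)+1) * ((T ^ (2*α-2+1) - (T-t) ^ (2*α-2+1)) / (2*α-2+1))
      ≤ 1/(2*α-1) := by
    have h1 : (T ^ (2*α-2+1) - (T-t) ^ (2*α-2+1)) / (2*α-2+1) ≤ T ^ (2*α-2+1) / (2*α-2+1) := by
      have := Real.rpow_nonneg hTt.le (2*α-2+1)
      apply (div_le_div_iff_of_pos_right (show (0:ℝ) < 2*α-2+1 by linarith)).mpr
      linarith
    calc T ^ (-(2*α)+1) * ((T ^ (2*α-2+1) - (T-t) ^ (2*α-2+1)) / (2*α-2+1))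
        ≤ T ^ (-(2*α)+1) * (T ^ (2*α-2+1) / (2*α-2+1)) :=
          mul_le_mul_of_nonneg_left h1 (Real.rpow_nonneg hT.le _)
      _ = (T ^ (-(2*α)+1) * T ^ (2*α-2+1)) / (2*α-2+1) := by ring
      _ = 1/(2*α-2+1) := by rw [rpadd hT (-(2*α)+1) (2*α-2+1) 0 (by ring), Real.rpow_zero]
      _ = 1/(2*α-1) := by rw [show (2*α-2+1:ℝ) = 2*α-1 from by ring]
  unfold bfun
  rw [intervalIntegral.integral_congr hinner, houter]
  have hlam : lam T α t = |Real.log (T-t)| / (2*α-1) := rfl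
  rw [hlam, one_div_div]
  have hJ : (|Real.log (T-t)| + Real.log T - 1/(2*α-1)) / (2*α-1)
      ≤ ((Real.log T - Real.log (T-t)) -
          T ^ (-(2*α)+1) * ((T ^ (2*α-2+1) - (T-t) ^ (2*α-2+1)) / (2*α-2+1))) / (2*α-1) := by
    apply (div_le_div_iff_of_pos_right h2a).mpr
    rw [hLe]
    linarith
  calc (|Real.log (T-t)| + Real.log T - 1/(2*α-1)) / |Real.log (T-t)|
      = (2*α-1) / |Real.log (T-t)| *
        ((|Real.log (T-t)| + Real.log T - 1/(2*α-1)) / (2*α-1)) := by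
        field_simp
    _ ≤ (2*α-1) / |Real.log (T-t)| *
        (((Real.log T - Real.log (T-t)) -
          T ^ (-(2*α)+1) * ((T ^ (2*α-2+1) - (T-t) ^ (2*α-2+1)) / (2*α-2+1))) / (2*α-1)) :=
        mul_le_mul_of_nonneg_left hJ (by positivity)
lemma field_id2 (L γ : ℝ) (hL : L ≠ 0) (hγ : γ ≠ 0) :
    γ/(4*L) * ((1/L)*(2/γ)*(2*L))^2 = 4/(γ*L) := by
  field_simp
  ring

lemma field_id1 (L γ K : ℝ) (hL : L ≠ 0) (hγ : γ ≠ 0) :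
    γ/(4*L) * (((1/L) * K)^2 * ((2/(γ/2))*(2*L))) = 2*K^2/L^2 := by
  rw [show (2:ℝ)/(γ/2) = 4/γ from by rw [div_div_eq_mul_div]; ring_nf]
  field_simp

lemma field_id0 (L γ : ℝ) (hL : L ≠ 0) (hγ : γ ≠ 0) :
    1/(4*(L/γ)) = γ/(4*L) := by
  field_simp

lemma final_bound {T α t : ℝ} (hα : 1/2 < α) (hT : 0 < T) (ht0 : 0 ≤ t) (htT : t < T)
    (hlog : Real.log (T - t) < 0)
    (hR1 : 2 ≤ |Real.log (T - t)|)
    (hR2 : |Real.log T| ≤ |Real.log (T - t)| / 4)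
    (hR3 : 1/(2*α-1) ≤ |Real.log (T - t)| / 4) :
    (2 / (bfun T α t) ^ 2) *
        Real.sqrt (2 * Real.sqrt (normSq T (contr T (fker T α t) (gker T α t)))
          + (ip T (fker T α t) (gker T α t)) ^ 2)
      ≤ (8 * Real.sqrt (2 * Real.sqrt (2 * (2/(2*α-1) + 1/((2*α-1)/4))^2) + 4/(2*α-1)))
        / Real.sqrt |Real.log (T - t)| := by
  have h2a : (0:ℝ) < 2*α-1 := by linarith
  have hLpos : 0 < |Real.log (T-t)| := by linarith
  have hLne : |Real.log (T-t)| ≠ 0 := ne_of_gt hLpos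
  have hγne : (2*α-1) ≠ 0 := ne_of_gt h2a
  have hδ : (0:ℝ) < (2*α-1)/4 := by linarith
  have hδα : (2*α-1)/4 < α - 1/2 := by linarith
  have hlamval : lam T α t = |Real.log (T-t)|/(2*α-1) := rfl
  have hc0sq : (1/(2*Real.sqrt (lam T α t)))^2 = (2*α-1)/(4*|Real.log (T-t)|) := by
    rw [hlamval, div_pow, one_pow, mul_pow, Real.sq_sqrt (by positivity),
      show ((2:ℝ)^2) = 4 from by norm_num]
    exact field_id0 _ _ hLne hγne
  have hc0nn : (0:ℝ) ≤ 1/(2*Real.sqrt (lam T α t)) := by positivity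
  have hsum : Real.log T - Real.log (T-t) ≤ 2*|Real.log (T-t)| := by
    have h1 : -Real.log (T-t) = |Real.log (T-t)| := (abs_of_neg hlog).symm
    have h2 : Real.log T ≤ |Real.log T| := le_abs_self _
    linarith
  set K : ℝ := 2/(2*α-1) + 1/((2*α-1)/4) with hK
  have hKpos : 0 < K := by rw [hK]; positivity
  -- ip bound
  have hip0 : 0 ≤ ip T (fker T α t) (gker T α t) := ip_fg_nonneg hα htT
  have hpre : (0:ℝ) ≤ 1/(2*Real.sqrt (lam T α t)) * (1/|Real.log (T-t)|) * (2/(2*α-1)) := by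
    positivity
  have hip1 : ip T (fker T α t) (gker T α t)
      ≤ (1/(2*Real.sqrt (lam T α t))) * (1/|Real.log (T-t)|) * (2/(2*α-1)) *
        (2*|Real.log (T-t)|) :=
    le_trans (ip_fg_le hα ht0 htT hLpos) (mul_le_mul_of_nonneg_left hsum hpre)
  have hipsq : (ip T (fker T α t) (gker T α t))^2 ≤ 4/((2*α-1)*|Real.log (T-t)|) := by
    have h1 := pow_le_pow_left₀ hip0 hip1 2
    have h2 : ((1/(2*Real.sqrt (lam T α t))) * (1/|Real.log (T-t)|) * (2/(2*α-1)) *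
        (2*|Real.log (T-t)|))^2 = 4/((2*α-1)*|Real.log (T-t)|) := by
      have e : ((1/(2*Real.sqrt (lam T α t))) * (1/|Real.log (T-t)|) * (2/(2*α-1)) *
          (2*|Real.log (T-t)|))^2 = (1/(2*Real.sqrt (lam T α t)))^2 *
          ((1/|Real.log (T-t)|) * (2/(2*α-1)) * (2*|Real.log (T-t)|))^2 := by ring
      rw [e, hc0sq]
      exact field_id2 _ _ hLne hγne
    rw [h2] at h1
    exact h1
  -- normSq bound
  have hns := normSq_le hα ht0 htT hLpos hδ hδα
  rw [show 2*(α-(2*α-1)/4)-1 = (2*α-1)/2 from by ring] at hns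
  have hns2 : normSq T (contr T (fker T α t) (gker T α t))
      ≤ 2*K^2/(|Real.log (T-t)|)^2 := by
    have hstep : ((1/(2*Real.sqrt (lam T α t))) * (1/|Real.log (T-t)|) * K)^2 *
        ((2/((2*α-1)/2)) * (Real.log T - Real.log (T - t)))
        ≤ ((1/(2*Real.sqrt (lam T α t))) * (1/|Real.log (T-t)|) * K)^2 *
        ((2/((2*α-1)/2)) * (2*|Real.log (T-t)|)) := by
      apply mul_le_mul_of_nonneg_left _ (sq_nonneg _)
      exact mul_le_mul_of_nonneg_left hsum (div_nonneg (by norm_num) (by linarith))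
    have hid : ((1/(2*Real.sqrt (lam T α t))) * (1/|Real.log (T-t)|) * K)^2 *
        ((2/((2*α-1)/2)) * (2*|Real.log (T-t)|)) = 2*K^2/(|Real.log (T-t)|)^2 := by
      have e : ((1/(2*Real.sqrt (lam T α t))) * (1/|Real.log (T-t)|) * K)^2 *
          ((2/((2*α-1)/2)) * (2*|Real.log (T-t)|))
          = (1/(2*Real.sqrt (lam T α t)))^2 *
            (((1/|Real.log (T-t)|) * K)^2 * ((2/((2*α-1)/2)) * (2*|Real.log (T-t)|))) := by
        ring
      rw [e, hc0sq]
      exact field_id1 _ _ _ hLne hγne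
    calc normSq T (contr T (fker T α t) (gker T α t))
        ≤ ((1/(2*Real.sqrt (lam T α t))) * (1/|Real.log (T-t)|) * K)^2 *
          ((2/((2*α-1)/2)) * (Real.log T - Real.log (T - t))) := hns
      _ ≤ ((1/(2*Real.sqrt (lam T α t))) * (1/|Real.log (T-t)|) * K)^2 *
          ((2/((2*α-1)/2)) * (2*|Real.log (T-t)|)) := hstep
      _ = 2*K^2/(|Real.log (T-t)|)^2 := hid
  have hnsqrt : Real.sqrt (normSq T (contr T (fker T α t) (gker T α t)))
      ≤ Real.sqrt (2*K^2) / |Real.log (T-t)| := by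
    have h1 := Real.sqrt_le_sqrt hns2
    have h2 : Real.sqrt (2*K^2/(|Real.log (T-t)|)^2)
        = Real.sqrt (2*K^2) / |Real.log (T-t)| := by
      rw [show 2*K^2/(|Real.log (T-t)|)^2 = (2*K^2) * (1/|Real.log (T-t)|)^2 from by
        field_simp, Real.sqrt_mul (by positivity), Real.sqrt_sq (by positivity)]
      field_simp
    rw [h2] at h1
    exact h1
  -- combine inside sqrt
  set D : ℝ := 2 * Real.sqrt (2*K^2) + 4/(2*α-1) with hD
  have hDpos : 0 < D := by
    rw [hD]
    have := Real.sqrt_nonneg (2*K^2)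
    have : (0:ℝ) < 4/(2*α-1) := by positivity
    positivity
  have hX : 2 * Real.sqrt (normSq T (contr T (fker T α t) (gker T α t)))
      + (ip T (fker T α t) (gker T α t))^2 ≤ D * (1/|Real.log (T-t)|) := by
    have e1 : (4:ℝ)/((2*α-1)*|Real.log (T-t)|) = (4/(2*α-1)) * (1/|Real.log (T-t)|) := by
      field_simp
    have e2 : Real.sqrt (2*K^2) / |Real.log (T-t)|
        = Real.sqrt (2*K^2) * (1/|Real.log (T-t)|) := by
      field_simp
    rw [e1] at hipsq
    rw [e2] at hnsqrt
    have h3 := mul_le_mul_of_nonneg_left hnsqrt (show (0:ℝ) ≤ 2 from by norm_num)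
    rw [hD]
    have eRHS : (2 * Real.sqrt (2*K^2) + 4/(2*α-1)) * (1/|Real.log (T-t)|)
        = 2 * (Real.sqrt (2*K^2) * (1/|Real.log (T-t)|))
          + (4/(2*α-1)) * (1/|Real.log (T-t)|) := by ring
    rw [eRHS]
    linarith
  have hXs : Real.sqrt (2 * Real.sqrt (normSq T (contr T (fker T α t) (gker T α t)))
      + (ip T (fker T α t) (gker T α t))^2) ≤ Real.sqrt D / Real.sqrt |Real.log (T-t)| := by
    refine le_trans (Real.sqrt_le_sqrt hX) (le_of_eq ?_)
    rw [Real.sqrt_mul hDpos.le, one_div, Real.sqrt_inv, div_eq_mul_inv]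
  -- bfun part
  have hbge := bfun_ge hα hT ht0 htT hlog
  have hb : (1/2:ℝ) ≤ bfun T α t := by
    refine le_trans ?_ hbge
    rw [le_div_iff₀ hLpos]
    have h4 : -|Real.log T| ≤ Real.log T := neg_abs_le _
    linarith
  have hbpos : 0 < bfun T α t := by linarith
  have hfrac : 2/(bfun T α t)^2 ≤ 8 := by
    rw [div_le_iff₀ (pow_pos hbpos 2)]
    have h4 := pow_le_pow_left₀ (show (0:ℝ) ≤ 1/2 from by norm_num) hb 2
    norm_num at h4
    linarith
  calc (2 / (bfun T α t) ^ 2) *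
      Real.sqrt (2 * Real.sqrt (normSq T (contr T (fker T α t) (gker T α t)))
        + (ip T (fker T α t) (gker T α t)) ^ 2)
      ≤ 8 * (Real.sqrt D / Real.sqrt |Real.log (T-t)|) :=
        mul_le_mul hfrac hXs (Real.sqrt_nonneg _) (by norm_num)
    _ = 8 * Real.sqrt D / Real.sqrt |Real.log (T-t)| := by rw [mul_div_assoc]
theorem stmt_15 (T α : ℝ) (hT : 0 < T) (hα : 1 / 2 < α) :
    ∃ C > 0, ∃ t₀ : ℝ, max 0 (T - 1 / Real.exp 1) < t₀ ∧ t₀ < T ∧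
      ∀ t : ℝ, t₀ < t → t < T →
        (2 / (bfun T α t) ^ 2) *
            Real.sqrt (2 * Real.sqrt (normSq T (contr T (fker T α t) (gker T α t)))
              + (ip T (fker T α t) (gker T α t)) ^ 2)
          ≤ C / Real.sqrt |Real.log (T - t)| := by
  have h2a : (0:ℝ) < 2*α-1 := by linarith
  have hγ4 : (0:ℝ) < 4/(2*α-1) := by positivity
  have habsT : (0:ℝ) ≤ |Real.log T| := abs_nonneg _
  set R : ℝ := 2 + 4*|Real.log T| + 4/(2*α-1) with hR
  have hR2 : 2 ≤ R := by rw [hR]; linarith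
  have hexpR : Real.exp (-R) < Real.exp (-1) := Real.exp_lt_exp.mpr (by linarith)
  have he1 : Real.exp (-1 : ℝ) = 1/Real.exp 1 := by rw [Real.exp_neg, one_div]
  have hexpT : Real.exp (-R) < T := by
    rcases le_or_gt 1 T with h1 | h1
    · have h2 : Real.exp (-R) < 1 := by
        have := Real.exp_lt_exp.mpr (show -R < 0 by linarith)
        simpa using this
      linarith
    · have hlogT : Real.log T < 0 := Real.log_neg hT h1
      have habs : |Real.log T| = -Real.log T := abs_of_neg hlogT
      have h3 : -R < Real.log T := by rw [hR]; rw [habs] at hR ⊢; linarith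
      calc Real.exp (-R) < Real.exp (Real.log T) := Real.exp_lt_exp.mpr h3
        _ = T := Real.exp_log hT
  refine ⟨8 * Real.sqrt (2*Real.sqrt (2*(2/(2*α-1) + 1/((2*α-1)/4))^2) + 4/(2*α-1)),
    ?_, T - Real.exp (-R), ?_, ?_, ?_⟩
  · have hD : 0 < 2*Real.sqrt (2*(2/(2*α-1) + 1/((2*α-1)/4))^2) + 4/(2*α-1) := by
      have h1 := Real.sqrt_nonneg (2*(2/(2*α-1) + 1/((2*α-1)/4))^2)
      linarith
    exact mul_pos (by norm_num) (Real.sqrt_pos.mpr hD)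
  · apply max_lt
    · linarith
    · have h5 := hexpR
      rw [he1] at h5
      linarith
  · linarith [Real.exp_pos (-R)]
  · intro t ht₀t htT
    have hTt : 0 < T - t := by linarith
    have hTtlt : T - t < Real.exp (-R) := by linarith
    have hlogt : Real.log (T - t) < -R := by
      calc Real.log (T-t) < Real.log (Real.exp (-R)) := Real.log_lt_log hTt hTtlt
        _ = -R := Real.log_exp _
    have hlogneg : Real.log (T - t) < 0 := by linarith
    have habs : |Real.log (T-t)| = -Real.log (T-t) := abs_of_neg hlogneg
    have hLgtR : R < |Real.log (T-t)| := by rw [habs]; linarith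
    have ht0 : (0:ℝ) ≤ t := by linarith
    have e4 : 4*(1/(2*α-1)) = 4/(2*α-1) := by ring
    apply final_bound hα hT ht0 htT hlogneg (by rw [hR] at hLgtR; linarith)
    · rw [hR] at hLgtR; linarith
    · rw [hR] at hLgtR; linarith
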